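/- Dual Nullstellensatz (classical, all finite truncations): let K be an algebraically closed field and F_1, …, F_s ∈ K[X_1, …, X_n]. Then the system F_1 = ⋯ = F_s = 0 has a solution in K^n if and only if for every N ∈ ℕ there exists a function y from ℕ^n to K with y(0) ≠ 0 such that for every multi-index I ∈ ℕ^n with i_1 + ⋯ + i_n ≤ N and every j ∈ {1, …, s} the (finite) sum over all multi-indices J of coeff_J(X^I · F_j) · y(J) equals 0. -/

import Mathlib

open MvPolynomial

/-- Dual Nullstellensatz (classical, all finite truncations): over an
algebraically closed field `K`, the system `F₁ = ⋯ = F_s = 0` has a solution in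
`Kⁿ` iff for every `N` there is a function `y` on multi-indices with `y 0 ≠ 0`
such that for every multi-index `I` of total degree at most `N` and every `j`,
the sum over the support of `X^I · F j` of `coeff J (X^I · F j) · y J`
vanishes. -/
theorem dual_nullstellensatz
    (K : Type*) [Field K] [IsAlgClosed K] (n s : ℕ)
    (F : Fin s → MvPolynomial (Fin n) K) :
    (∃ x : Fin n → K, ∀ j : Fin s, eval x (F j) = 0) ↔
      (∀ N : ℕ, ∃ y : (Fin n →₀ ℕ) → K, y 0 ≠ 0 ∧
        ∀ I : Fin n →₀ ℕ, (∑ t, I t) ≤ N → ∀ j : Fin s,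
          ∑ J ∈ (monomial I (1 : K) * F j).support,
            coeff J (monomial I (1 : K) * F j) * y J = 0) := by
  constructor
  · rintro ⟨x, hx⟩ N
    refine ⟨fun J => ∏ t, x t ^ J t, by simp, fun I _ j => ?_⟩
    rw [← eval_eq' x (monomial I 1 * F j), map_mul, hx j, mul_zero]
  · intro h
    by_contra hne
    push_neg at hne
    -- no common zero, so the zero locus of the span of the `F j` is empty
    have hzl : MvPolynomial.zeroLocus K (Ideal.span (Set.range F)) = ∅ := by
      rw [MvPolynomial.zeroLocus_span]
      ext x
      simp only [Set.mem_setOf_eq, Set.mem_empty_iff_false, iff_false]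
      intro hall
      obtain ⟨j, hj⟩ := hne x
      exact hj (by simpa using hall (F j) ⟨j, rfl⟩)
    have hrad : (Ideal.span (Set.range F)).radical = ⊤ := by
      rw [← MvPolynomial.vanishingIdeal_zeroLocus_eq_radical (K := K), hzl,
        MvPolynomial.vanishingIdeal_empty]
    have h1 : (1 : MvPolynomial (Fin n) K) ∈ Ideal.span (Set.range F) := by
      have : (1 : MvPolynomial (Fin n) K) ∈ (Ideal.span (Set.range F)).radical := by
        rw [hrad]; trivial
      obtain ⟨m, hm⟩ := this
      simpa using hm
    obtain ⟨G, hG⟩ := Ideal.mem_span_range_iff_exists_fun.mp h1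
    set N : ℕ := Finset.univ.sup fun j => (G j).totalDegree with hN
    obtain ⟨y, hy0, hy⟩ := h N
    -- the linear functional `L P = ∑_J coeff J P * y J`
    let L : MvPolynomial (Fin n) K →ₗ[K] K :=
      (Finsupp.lsum K fun J => LinearMap.toSpanSingleton K K (y J)) ∘ₗ
        (AddMonoidAlgebra.coeffLinearEquiv K).toLinearMap
    have hLdef : ∀ P : MvPolynomial (Fin n) K,
        L P = ∑ J ∈ P.support, coeff J P * y J := by
      intro P
      simp [L, Finsupp.lsum, Finsupp.sum, LinearMap.toSpanSingleton, smul_eq_mul]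
      rfl
    have hL1 : L 1 = y 0 := by
      have : (1 : MvPolynomial (Fin n) K) = monomial 0 1 := by simp
      classical
      rw [hLdef, this, support_monomial]
      simp
    have hLmon : ∀ (I : Fin n →₀ ℕ) (c : K) (j : Fin s), (∑ t, I t) ≤ N →
        L (monomial I c * F j) = 0 := by
      intro I c j hI
      have : monomial I c * F j = c • (monomial I (1 : K) * F j) := by
        rw [← smul_mul_assoc]
        congr 1
        rw [smul_monomial, smul_eq_mul, mul_one]
      rw [this, map_smul, smul_eq_mul, hLdef, hy I hI j, mul_zero]
    -- `L (G j * F j) = 0`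
    have hLG : ∀ j : Fin s, L (G j * F j) = 0 := by
      intro j
      conv_lhs => rw [(G j).as_sum, Finset.sum_mul, map_sum]
      refine Finset.sum_eq_zero fun I hI => ?_
      refine hLmon I _ j ?_
      calc (∑ t, I t) = I.sum fun _ e => e := (Finsupp.sum_fintype I (fun _ e => e) fun _ => rfl).symm
        _ ≤ (G j).totalDegree := le_totalDegree hI
        _ ≤ N := Finset.le_sup (f := fun j => (G j).totalDegree) (Finset.mem_univ j)
    have : L 1 = 0 := by
      rw [← hG, map_sum]
      exact Finset.sum_eq_zero fun j _ => hLG j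
    rw [hL1] at this
    exact hy0 this
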